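/- Let x₁,…,xₙ be pairwise distinct complex numbers satisfying the Bethe equations Σ_{j≠i} 1/(x_i - x_j) = x_i for every i = 1,…,n, and set Q(x) = ∏_{i=1}^n (x - x_i). Then 2x·Q'(x) - Q''(x) = 2n·Q(x) for all x ∈ ℂ. -/

import Mathlib

open Polynomial Finset

lemma deriv_prod_XC {ι : Type*} [DecidableEq ι] (s : Finset ι) (x : ι → ℂ) :
    derivative (∏ i ∈ s, (X - C (x i))) = ∑ i ∈ s, ∏ j ∈ s.erase i, (X - C (x j)) := by
  induction s using Finset.induction with
  | empty => simp
  | insert a s ha ih =>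
    rw [Finset.prod_insert ha, derivative_mul, ih, Finset.sum_insert ha,
      Finset.erase_insert ha]
    simp only [derivative_sub, derivative_X, derivative_C, sub_zero, one_mul,
      Finset.mul_sum]
    congr 1
    refine Finset.sum_congr rfl fun i hi => ?_
    rw [Finset.erase_insert_of_ne (by rintro rfl; exact ha hi),
      Finset.prod_insert (fun h => ha (Finset.mem_of_mem_erase h))]

theorem stmt4 (n : ℕ) (x : Fin n → ℂ) (hinj : Function.Injective x)
    (hBethe : ∀ i : Fin n, ∑ j ∈ Finset.univ.erase i, 1 / (x i - x j) = x i)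
    (Q : Polynomial ℂ) (hQ : Q = ∏ i, (X - C (x i))) :
    ∀ z : ℂ, 2 * z * (derivative Q).eval z - (derivative (derivative Q)).eval z
      = 2 * (n : ℂ) * Q.eval z := by
  rcases Nat.eq_zero_or_pos n with hn0 | hn
  · subst hn0; subst hQ; intro z; simp
  have hne : ∀ i j : Fin n, i ≠ j → x i - x j ≠ 0 := by
    intro i j h
    exact sub_ne_zero.2 fun e => h (hinj e)
  set P : Polynomial ℂ := C 2 * X * derivative Q - derivative (derivative Q)
      - C (2 * (n : ℂ)) * Q with hP
  -- degree facts
  have hmonic : Q.Monic := hQ ▸ monic_prod_of_monic _ _ (fun i _ => monic_X_sub_C _)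
  have hdeg : Q.natDegree = n := by
    rw [hQ, Polynomial.natDegree_prod _ _ (fun i _ => X_sub_C_ne_zero _)]
    simp
  -- derivative formulas
  have hd1 : derivative Q = ∑ i, ∏ j ∈ Finset.univ.erase i, (X - C (x j)) := by
    rw [hQ]; exact deriv_prod_XC _ _
  have hd2 : derivative (derivative Q)
      = ∑ i : Fin n, ∑ k ∈ Finset.univ.erase i,
          ∏ j ∈ (Finset.univ.erase i).erase k, (X - C (x j)) := by
    rw [hd1, derivative_sum]
    exact Finset.sum_congr rfl fun i _ => deriv_prod_XC _ _
  -- evaluations at the roots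
  have hQa : ∀ a : Fin n, Q.eval (x a) = 0 := by
    intro a
    rw [hQ, eval_prod]
    exact Finset.prod_eq_zero (Finset.mem_univ a) (by simp)
  have hQ'a : ∀ a : Fin n, (derivative Q).eval (x a)
      = ∏ j ∈ Finset.univ.erase a, (x a - x j) := by
    intro a
    rw [hd1, eval_finset_sum]
    rw [Finset.sum_eq_single a]
    · simp [eval_prod]
    · intro i _ hia
      rw [eval_prod]
      refine Finset.prod_eq_zero (Finset.mem_erase.2 ⟨hia.symm, Finset.mem_univ a⟩) ?_
      simp
    · simp
  -- the key sum
  have hS : ∀ a : Fin n, ∑ k ∈ Finset.univ.erase a,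
      (∏ j ∈ ((Finset.univ.erase a).erase k), (x a - x j))
      = (∏ j ∈ Finset.univ.erase a, (x a - x j)) * x a := by
    intro a
    have hstep : ∀ k ∈ Finset.univ.erase a,
        ∏ j ∈ ((Finset.univ.erase a).erase k), (x a - x j)
        = (∏ j ∈ Finset.univ.erase a, (x a - x j)) * (1 / (x a - x k)) := by
      intro k hk
      have hk' := Finset.mul_prod_erase _ (fun j => x a - x j) hk
      have hxk : x a - x k ≠ 0 := hne a k (Finset.ne_of_mem_erase hk).symm
      field_simp
      linear_combination hk'
    rw [Finset.sum_congr rfl hstep, ← Finset.mul_sum, hBethe a]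
  have hQ''a : ∀ a : Fin n, (derivative (derivative Q)).eval (x a)
      = 2 * ((∏ j ∈ Finset.univ.erase a, (x a - x j)) * x a) := by
    intro a
    rw [hd2, eval_finset_sum]
    have hsplit : ∀ i : Fin n, (eval (x a))
        (∑ k ∈ Finset.univ.erase i, ∏ j ∈ (Finset.univ.erase i).erase k, (X - C (x j)))
        = ∑ k ∈ Finset.univ.erase i,
            ∏ j ∈ (Finset.univ.erase i).erase k, (x a - x j) := by
      intro i
      rw [eval_finset_sum]
      exact Finset.sum_congr rfl fun k _ => by rw [eval_prod]; simp
    simp only [hsplit]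
    rw [← Finset.add_sum_erase _ _ (Finset.mem_univ a), hS a]
    have hrest : ∑ i ∈ Finset.univ.erase a, ∑ k ∈ Finset.univ.erase i,
        ∏ j ∈ (Finset.univ.erase i).erase k, (x a - x j)
        = ∑ i ∈ Finset.univ.erase a,
            ∏ j ∈ (Finset.univ.erase a).erase i, (x a - x j) := by
      refine Finset.sum_congr rfl fun i hi => ?_
      have hia : i ≠ a := Finset.ne_of_mem_erase hi
      rw [Finset.sum_eq_single_of_mem a (Finset.mem_erase.2 ⟨hia.symm, Finset.mem_univ a⟩)]
      · rw [Finset.erase_right_comm]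
      · intro k hk hka
        refine Finset.prod_eq_zero (Finset.mem_erase.2 ⟨hka.symm,
          Finset.mem_erase.2 ⟨hia.symm, Finset.mem_univ a⟩⟩) ?_
        simp
    rw [hrest, hS a]
    ring
  -- P vanishes at all roots
  have heval : ∀ a : Fin n, P.eval (x a) = 0 := by
    intro a
    simp only [hP, eval_sub, eval_mul, eval_C, eval_X, hQa, hQ'a, hQ''a]
    ring
  -- coefficient bound
  have hcoeff : ∀ m : ℕ, n ≤ m → P.coeff m = 0 := by
    intro m hm
    obtain ⟨k, rfl⟩ : ∃ k, m = k + 1 :=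
      Nat.exists_eq_succ_of_ne_zero (by omega)
    have h2 : (derivative (derivative Q)).coeff (k + 1) = 0 := by
      rw [coeff_derivative, coeff_derivative,
        coeff_eq_zero_of_natDegree_lt (by omega)]
      ring
    have h1 : P.coeff (k + 1) = 2 * (Q.coeff (k + 1) * (k + 1))
        - 0 - 2 * (n : ℂ) * Q.coeff (k + 1) := by
      rw [hP]
      simp [mul_assoc, coeff_X_mul, coeff_derivative, h2]
    rcases eq_or_lt_of_le hm with he | hlt
    · have hc : Q.coeff (k + 1) = 1 := by
        rw [← he, ← hdeg]; exact hmonic.coeff_natDegree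
      rw [h1, hc, he]
      push_cast
      ring
    · rw [h1, coeff_eq_zero_of_natDegree_lt (by omega)]
      ring
  have hdlt : P.natDegree < n := by
    by_cases hP0 : P = 0
    · rw [hP0]; simpa using hn
    · rw [natDegree_lt_iff_degree_lt hP0]
      exact (degree_lt_iff_coeff_zero _ _).2 fun m hm => hcoeff m (by exact_mod_cast hm)
  have hP0 : P = 0 :=
    eq_zero_of_natDegree_lt_card_of_eval_eq_zero P hinj heval (by simpa using hdlt)
  intro z
  have := congrArg (eval z) hP0
  simp only [hP, eval_sub, eval_mul, eval_C, eval_X, eval_zero] at this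
  linear_combination this
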